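/- Let M be the adjacency matrix of T_{p,q,r} and let B = M − 2·I be the Gram matrix of the lattice T_{p,q,r}^{(2)} (each vertex v has B(v,v) = −2 and adjacent vertices pair to 1). If 1/p + 1/q + 1/r < 1 then B is nondegenerate and has exactly one positive eigenvalue (it is Lorentzian/hyperbolic); if 1/p + 1/q + 1/r = 1 then B is negative semidefinite with one-dimensional kernel (it is affine); if 1/p + 1/q + 1/r > 1 then B is negative definite. -/

import Mathlib

open scoped Matrix

/-- The vertex set of the tree `T_{p,q,r}`: a central vertex (`none`) together
with three arms of `p-1`, `q-1` and `r-1` vertices. -/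
abbrev TVertex (p q r : ℕ) : Type := Option (Fin (p - 1) ⊕ (Fin (q - 1) ⊕ Fin (r - 1)))

/-- Entry recording an edge between positions `i` and `j` of a path. -/
def pathEntry (i j : ℕ) : ℝ := if i + 1 = j ∨ j + 1 = i then 1 else 0

/-- Entry recording the edge from the central vertex to position `i` of an arm. -/
def tipEntry (i : ℕ) : ℝ := if i = 0 then 1 else 0

/-- The adjacency matrix of the tree `T_{p,q,r}`: a central vertex joined to one
end of each of three paths with `p-1`, `q-1`, and `r-1` vertices respectively. -/
def adjT (p q r : ℕ) : Matrix (TVertex p q r) (TVertex p q r) ℝ :=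
  fun v w =>
    match v, w with
    | none, none => 0
    | none, some (Sum.inl i) => tipEntry i
    | none, some (Sum.inr (Sum.inl i)) => tipEntry i
    | none, some (Sum.inr (Sum.inr i)) => tipEntry i
    | some (Sum.inl i), none => tipEntry i
    | some (Sum.inr (Sum.inl i)), none => tipEntry i
    | some (Sum.inr (Sum.inr i)), none => tipEntry i
    | some (Sum.inl i), some (Sum.inl j) => pathEntry i j
    | some (Sum.inr (Sum.inl i)), some (Sum.inr (Sum.inl j)) => pathEntry i j
    | some (Sum.inr (Sum.inr i)), some (Sum.inr (Sum.inr j)) => pathEntry i j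
    | _, _ => 0

/-- `μ(p,q,r)`, the largest eigenvalue of the adjacency matrix of `T_{p,q,r}`. -/
noncomputable def muT (p q r : ℕ) : ℝ :=
  sSup {μ : ℝ | ∃ x : TVertex p q r → ℝ, x ≠ 0 ∧ (adjT p q r).mulVec x = μ • x}

/-- The Gram matrix of the lattice `T_{p,q,r}^{(2)}`: each vertex has square
`-2` and adjacent vertices pair to `1`. -/
noncomputable def gramT (p q r : ℕ) : Matrix (TVertex p q r) (TVertex p q r) ℝ :=
  adjT p q r - (2 : ℝ) • (1 : Matrix (TVertex p q r) (TVertex p q r) ℝ)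


/-- Quadratic form of one arm (path of `m+1` vertices attached to a center of value `t`). -/
def armG (m : ℕ) (t : ℝ) (z : Fin (m + 1) → ℝ) : ℝ :=
  2 * ∑ i, z i ^ 2 - 2 * ∑ i : Fin m, z i.castSucc * z i.succ - 2 * t * z 0

lemma armG_succ (m : ℕ) (t : ℝ) (z : Fin (m + 2) → ℝ) :
    armG (m + 1) t z = 2 * z 0 ^ 2 - 2 * t * z 0 + armG m (z 0) (Fin.tail z) := by
  unfold armG
  rw [Fin.sum_univ_succ (f := fun i => z i ^ 2), Fin.sum_univ_succ (f := fun i : Fin (m+1) => z i.castSucc * z i.succ)]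
  simp only [Fin.tail, Fin.succ_castSucc, Fin.castSucc_zero, Fin.succ_zero_eq_one]
  ring

lemma armG_key (m : ℕ) (t : ℝ) (z : Fin (m + 1) → ℝ) :
    0 ≤ armG m t z + (((m : ℝ) + 1) / ((m : ℝ) + 2)) * t ^ 2 ∧
      (armG m t z + (((m : ℝ) + 1) / ((m : ℝ) + 2)) * t ^ 2 = 0 ↔
        ∀ i : Fin (m + 1), z i = (((m : ℝ) + 1 - (i : ℕ)) / ((m : ℝ) + 2)) * t) := by
  induction m generalizing t with
  | zero =>
    simp only [Nat.cast_zero]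
    have h : armG 0 t z + ((0 : ℝ) + 1) / ((0 : ℝ) + 2) * t ^ 2 = 2 * (z 0 - t / 2) ^ 2 := by
      unfold armG; simp; ring
    constructor
    · rw [h]; positivity
    · rw [h]
      constructor
      · intro he i
        have h0 : z 0 - t / 2 = 0 := by nlinarith [sq_nonneg (z 0 - t/2)]
        have : i = 0 := Fin.fin_one_eq_zero i
        subst this
        simp only [Fin.val_zero, Nat.cast_zero]
        linarith
      · intro hz
        have := hz 0
        simp only [Fin.val_zero, Nat.cast_zero] at this
        rw [this]; ring
  | succ m ih =>
    have hm2 : ((m : ℝ) + 2) ≠ 0 := by positivity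
    have hm3 : ((m : ℝ) + 3) ≠ 0 := by positivity
    have hexp : armG (m + 1) t z + ((((m:ℕ)+1 : ℕ) : ℝ) + 1) / ((((m:ℕ)+1 : ℕ) : ℝ) + 2) * t ^ 2 =
        (armG m (z 0) (Fin.tail z) + (((m : ℝ) + 1) / ((m : ℝ) + 2)) * (z 0) ^ 2)
          + (((m : ℝ) + 3) / ((m : ℝ) + 2)) * (z 0 - (((m : ℝ) + 2) / ((m : ℝ) + 3)) * t) ^ 2 := by
      rw [armG_succ]
      push_cast
      field_simp
      ring
    obtain ⟨ihpos, iheq⟩ := ih (z 0) (Fin.tail z)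
    have hsq : 0 ≤ (((m : ℝ) + 3) / ((m : ℝ) + 2)) * (z 0 - (((m : ℝ) + 2) / ((m : ℝ) + 3)) * t) ^ 2 := by
      positivity
    constructor
    · rw [hexp]; push_cast; linarith
    · rw [hexp]
      constructor
      · intro he
        have h1 : armG m (z 0) (Fin.tail z) + (((m : ℝ) + 1) / ((m : ℝ) + 2)) * (z 0) ^ 2 = 0 := by
          linarith
        have h2 : (((m : ℝ) + 3) / ((m : ℝ) + 2)) * (z 0 - (((m : ℝ) + 2) / ((m : ℝ) + 3)) * t) ^ 2 = 0 := by
          linarith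
        have hz0 : z 0 = (((m : ℝ) + 2) / ((m : ℝ) + 3)) * t := by
          have := (mul_eq_zero.mp h2).resolve_left (by positivity)
          have := pow_eq_zero_iff (n := 2) (by norm_num) |>.mp this
          linarith
        have htail := iheq.mp h1
        intro i
        refine Fin.cases ?_ ?_ i
        · simp only [Fin.val_zero, Nat.cast_zero]
          rw [hz0]; push_cast; ring
        · intro j
          have hj := htail j
          simp only [Fin.tail] at hj
          rw [hj, hz0]
          have : ((j.succ : ℕ) : ℝ) = (j : ℕ) + 1 := by simp
          rw [this]
          push_cast
          field_simp
          ring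
      · intro hz
        have hz0 : z 0 = (((m : ℝ) + 2) / ((m : ℝ) + 3)) * t := by
          have h0 := hz 0
          simp only [Fin.val_zero, Nat.cast_zero] at h0
          rw [h0]; push_cast; ring
        have h1 : armG m (z 0) (Fin.tail z) + (((m : ℝ) + 1) / ((m : ℝ) + 2)) * (z 0) ^ 2 = 0 := by
          apply iheq.mpr
          intro j
          have hj := hz j.succ
          simp only [Fin.tail]
          rw [hj, hz0]
          have : ((j.succ : ℕ) : ℝ) = (j : ℕ) + 1 := by simp
          rw [this]
          push_cast
          field_simp
          ring
        rw [h1, hz0]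
        ring

lemma pathEntry_comm (i j : ℕ) : pathEntry i j = pathEntry j i :=
  if_congr or_comm rfl rfl

lemma sum_tip (m : ℕ) (w : Fin (m + 1) → ℝ) :
    ∑ i : Fin (m + 1), tipEntry i.val * w i = w 0 := by
  have h : ∀ i : Fin (m + 1), tipEntry i.val * w i = if i = 0 then w i else 0 := by
    intro i
    rcases eq_or_ne i 0 with h | h
    · subst h; simp [tipEntry]
    · rw [if_neg h]
      have hv : (i : ℕ) ≠ 0 := fun hc => h (Fin.ext hc)
      unfold tipEntry
      rw [if_neg hv, zero_mul]
  rw [Finset.sum_congr rfl fun i _ => h i]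
  simp

lemma sum_path_last (m : ℕ) (w : Fin (m + 1) → ℝ) :
    ∑ j : Fin (m + 1), pathEntry (m + 1) j.val * w j = w (Fin.last m) := by
  have h : ∀ j : Fin (m + 1), pathEntry (m + 1) j.val * w j = if j = Fin.last m then w j else 0 := by
    intro j
    rcases eq_or_ne j (Fin.last m) with h | h
    · subst h; simp [pathEntry, Fin.last]
    · rw [if_neg h]
      have hj : (j : ℕ) ≠ m := fun hc => h (Fin.ext (by simpa [Fin.last] using hc))
      have hj2 : (j : ℕ) < m + 1 := j.isLt
      have hc : ¬ (m + 1 + 1 = (j : ℕ) ∨ (j : ℕ) + 1 = m + 1) := by omega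
      unfold pathEntry
      rw [if_neg hc, zero_mul]
  rw [Finset.sum_congr rfl fun j _ => h j]
  simp

lemma sum_path (m : ℕ) (z : Fin (m + 1) → ℝ) :
    (∑ i : Fin (m + 1), ∑ j : Fin (m + 1), z i * (pathEntry i.val j.val * z j))
      = 2 * ∑ i : Fin m, z i.castSucc * z i.succ := by
  induction m with
  | zero => simp [pathEntry]
  | succ m ih =>
    have hrow : ∀ i : Fin (m + 2), (∑ j : Fin (m + 2), z i * (pathEntry i.val j.val * z j))
        = (∑ j : Fin (m + 1), z i * (pathEntry i.val j.castSucc.val * z j.castSucc))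
          + z i * (pathEntry i.val (m + 1) * z (Fin.last (m + 1))) := by
      intro i
      rw [Fin.sum_univ_castSucc (f := fun j : Fin (m + 2) => z i * (pathEntry i.val j.val * z j))]
      simp [Fin.last]
    rw [Fin.sum_univ_castSucc
      (f := fun i : Fin (m + 2) => ∑ j : Fin (m + 2), z i * (pathEntry i.val j.val * z j))]
    rw [Finset.sum_congr rfl fun (i : Fin (m + 1)) _ => hrow i.castSucc, hrow (Fin.last (m + 1)),
      Finset.sum_add_distrib]
    have hA : (∑ i : Fin (m + 1), ∑ j : Fin (m + 1),
        z i.castSucc * (pathEntry i.castSucc.val j.castSucc.val * z j.castSucc))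
        = 2 * ∑ i : Fin m, z i.castSucc.castSucc * z i.succ.castSucc := by
      have := ih (fun i : Fin (m + 1) => z i.castSucc)
      simp only [Fin.coe_castSucc] at this ⊢
      rw [this]
    have hB : (∑ i : Fin (m + 1), z i.castSucc * (pathEntry i.castSucc.val (m + 1) * z (Fin.last (m + 1))))
        = z (Fin.last m).castSucc * z (Fin.last (m + 1)) := by
      have := sum_path_last m (fun j : Fin (m + 1) => z j.castSucc * z (Fin.last (m + 1)))
      rw [← this]
      apply Finset.sum_congr rfl
      intro i _
      rw [pathEntry_comm, Fin.coe_castSucc]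
      ring
    have hC : (∑ j : Fin (m + 1), z (Fin.last (m + 1)) * (pathEntry (Fin.last (m + 1)).val j.castSucc.val * z j.castSucc))
        = z (Fin.last (m + 1)) * z (Fin.last m).castSucc := by
      have := sum_path_last m (fun j : Fin (m + 1) => z (Fin.last (m + 1)) * z j.castSucc)
      rw [← this]
      apply Finset.sum_congr rfl
      intro j _
      simp only [Fin.coe_castSucc, Fin.val_last]
      ring
    have hD : pathEntry (Fin.last (m + 1)).val (m + 1) = 0 := by
      unfold pathEntry
      rw [if_neg]
      simp [Fin.last]
    rw [hA, hB, hC, hD]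
    rw [Fin.sum_univ_castSucc (f := fun i : Fin (m + 1) => z i.castSucc * z i.succ)]
    rw [Fin.succ_last]
    simp only [← Fin.succ_castSucc]
    ring

lemma arm_row (m : ℕ) (t : ℝ) (w : Fin (m + 1) → ℝ) :
    (∑ i : Fin (m + 1), w i * (tipEntry i.val * t + ∑ j : Fin (m + 1), pathEntry i.val j.val * w j))
      = t * w 0 + 2 * ∑ i : Fin m, w i.castSucc * w i.succ := by
  simp only [mul_add]
  rw [Finset.sum_add_distrib]
  have h1 : (∑ i : Fin (m + 1), w i * (tipEntry i.val * t)) = t * w 0 := by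
    have h := sum_tip m (fun i => w i * t)
    rw [mul_comm t (w 0), ← h]
    apply Finset.sum_congr rfl
    intro i _
    ring
  have h2 : (∑ i : Fin (m + 1), w i * ∑ j : Fin (m + 1), pathEntry i.val j.val * w j)
      = 2 * ∑ i : Fin m, w i.castSucc * w i.succ := by
    rw [← sum_path m w]
    apply Finset.sum_congr rfl
    intro i _
    rw [Finset.mul_sum]
  rw [h1, h2]

lemma quad (a b c : ℕ) (x : TVertex (a + 2) (b + 2) (c + 2) → ℝ) :
    x ⬝ᵥ (gramT (a + 2) (b + 2) (c + 2)) *ᵥ x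
      = -2 * (x none) ^ 2
        - armG a (x none) (fun i => x (some (Sum.inl i)))
        - armG b (x none) (fun i => x (some (Sum.inr (Sum.inl i))))
        - armG c (x none) (fun i => x (some (Sum.inr (Sum.inr i)))) := by
  have hxx : x ⬝ᵥ x = (x none) ^ 2
      + ∑ i : Fin (a + 1), x (some (Sum.inl i)) ^ 2
      + ∑ i : Fin (b + 1), x (some (Sum.inr (Sum.inl i))) ^ 2
      + ∑ i : Fin (c + 1), x (some (Sum.inr (Sum.inr i))) ^ 2 := by
    simp [dotProduct, Fintype.sum_option, Fintype.sum_sum_type, sq]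
    ring
  have hax : x ⬝ᵥ (adjT (a + 2) (b + 2) (c + 2)) *ᵥ x
      = 2 * x none * x (some (Sum.inl (0 : Fin (a+1))))
        + 2 * x none * x (some (Sum.inr (Sum.inl (0 : Fin (b+1)))))
        + 2 * x none * x (some (Sum.inr (Sum.inr (0 : Fin (c+1)))))
        + 2 * ∑ i : Fin a, x (some (Sum.inl i.castSucc)) * x (some (Sum.inl i.succ))
        + 2 * ∑ i : Fin b, x (some (Sum.inr (Sum.inl i.castSucc))) * x (some (Sum.inr (Sum.inl i.succ)))
        + 2 * ∑ i : Fin c, x (some (Sum.inr (Sum.inr i.castSucc))) * x (some (Sum.inr (Sum.inr i.succ))) := by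
    simp only [dotProduct, Matrix.mulVec, Fintype.sum_option, Fintype.sum_sum_type, adjT,
      zero_mul, mul_zero, add_zero, zero_add, Finset.sum_const_zero]
    have hax0 : x none *
          ((∑ i : Fin (a + 1), tipEntry i.val * x (some (Sum.inl i))) +
            ((∑ i : Fin (b + 1), tipEntry i.val * x (some (Sum.inr (Sum.inl i)))) +
              ∑ i : Fin (c + 1), tipEntry i.val * x (some (Sum.inr (Sum.inr i))))) +
        ((∑ i : Fin (a + 1), x (some (Sum.inl i)) *
            (tipEntry i.val * x none + ∑ j : Fin (a + 1), pathEntry i.val j.val * x (some (Sum.inl j)))) +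
          ((∑ i : Fin (b + 1), x (some (Sum.inr (Sum.inl i))) *
              (tipEntry i.val * x none +
                ∑ j : Fin (b + 1), pathEntry i.val j.val * x (some (Sum.inr (Sum.inl j))))) +
            ∑ i : Fin (c + 1), x (some (Sum.inr (Sum.inr i))) *
              (tipEntry i.val * x none +
                ∑ j : Fin (c + 1), pathEntry i.val j.val * x (some (Sum.inr (Sum.inr j)))))) =
        2 * x none * x (some (Sum.inl (0 : Fin (a+1)))) +
          2 * x none * x (some (Sum.inr (Sum.inl (0 : Fin (b+1))))) +
          2 * x none * x (some (Sum.inr (Sum.inr (0 : Fin (c+1))))) +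
          2 * ∑ i : Fin a, x (some (Sum.inl i.castSucc)) * x (some (Sum.inl i.succ)) +
          2 * ∑ i : Fin b, x (some (Sum.inr (Sum.inl i.castSucc))) * x (some (Sum.inr (Sum.inl i.succ))) +
          2 * ∑ i : Fin c, x (some (Sum.inr (Sum.inr i.castSucc))) * x (some (Sum.inr (Sum.inr i.succ))) := by
      rw [sum_tip a (fun i => x (some (Sum.inl i))),
        sum_tip b (fun i => x (some (Sum.inr (Sum.inl i)))),
        sum_tip c (fun i => x (some (Sum.inr (Sum.inr i)))),
        arm_row a (x none) (fun i => x (some (Sum.inl i))),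
        arm_row b (x none) (fun i => x (some (Sum.inr (Sum.inl i)))),
        arm_row c (x none) (fun i => x (some (Sum.inr (Sum.inr i))))]
      ring
    exact hax0
  rw [gramT, Matrix.sub_mulVec, Matrix.smul_mulVec, Matrix.one_mulVec,
    dotProduct_sub, dotProduct_smul, hax, hxx]
  unfold armG
  rw [smul_eq_mul]
  push_cast
  ring


/-- The normalized nonnegative arm energy. -/
noncomputable def armN (m : ℕ) (t : ℝ) (z : Fin (m + 1) → ℝ) : ℝ :=
  armG m t z + (((m : ℝ) + 1) / ((m : ℝ) + 2)) * t ^ 2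

lemma armN_nonneg (m : ℕ) (t : ℝ) (z : Fin (m + 1) → ℝ) : 0 ≤ armN m t z :=
  (armG_key m t z).1

lemma armN_eq_zero_iff (m : ℕ) (t : ℝ) (z : Fin (m + 1) → ℝ) :
    armN m t z = 0 ↔ ∀ i : Fin (m + 1), z i = (((m : ℝ) + 1 - (i : ℕ)) / ((m : ℝ) + 2)) * t :=
  (armG_key m t z).2

/-- The null vector of the affine case. -/
noncomputable def yv (a b c : ℕ) : TVertex (a + 2) (b + 2) (c + 2) → ℝ :=
  fun v =>
    match v with
    | none => 1
    | some (Sum.inl i) => ((a : ℝ) + 1 - (i : ℕ)) / ((a : ℝ) + 2)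
    | some (Sum.inr (Sum.inl i)) => ((b : ℝ) + 1 - (i : ℕ)) / ((b : ℝ) + 2)
    | some (Sum.inr (Sum.inr i)) => ((c : ℝ) + 1 - (i : ℕ)) / ((c : ℝ) + 2)

lemma quadN (a b c : ℕ) (x : TVertex (a + 2) (b + 2) (c + 2) → ℝ) :
    x ⬝ᵥ (gramT (a + 2) (b + 2) (c + 2)) *ᵥ x
      = (1 - (1 / ((a : ℝ) + 2) + 1 / ((b : ℝ) + 2) + 1 / ((c : ℝ) + 2))) * (x none) ^ 2
        - armN a (x none) (fun i => x (some (Sum.inl i)))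
        - armN b (x none) (fun i => x (some (Sum.inr (Sum.inl i))))
        - armN c (x none) (fun i => x (some (Sum.inr (Sum.inr i)))) := by
  rw [quad]
  unfold armN
  have h1 : ((a : ℝ) + 2) ≠ 0 := by positivity
  have h2 : ((b : ℝ) + 2) ≠ 0 := by positivity
  have h3 : ((c : ℝ) + 2) ≠ 0 := by positivity
  field_simp
  ring

lemma eq_smul_yv (a b c : ℕ) (x : TVertex (a + 2) (b + 2) (c + 2) → ℝ)
    (h1 : armN a (x none) (fun i => x (some (Sum.inl i))) = 0)
    (h2 : armN b (x none) (fun i => x (some (Sum.inr (Sum.inl i)))) = 0)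
    (h3 : armN c (x none) (fun i => x (some (Sum.inr (Sum.inr i)))) = 0) :
    x = (x none) • yv a b c := by
  funext v
  match v with
  | none => simp [yv]
  | some (Sum.inl i) =>
    have := (armN_eq_zero_iff _ _ _).mp h1 i
    simp only [Pi.smul_apply, smul_eq_mul, yv, this]
    ring
  | some (Sum.inr (Sum.inl i)) =>
    have := (armN_eq_zero_iff _ _ _).mp h2 i
    simp only [Pi.smul_apply, smul_eq_mul, yv, this]
    ring
  | some (Sum.inr (Sum.inr i)) =>
    have := (armN_eq_zero_iff _ _ _).mp h3 i
    simp only [Pi.smul_apply, smul_eq_mul, yv, this]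
    ring

lemma armN_yv₁ (a b c : ℕ) :
    armN a ((yv a b c) none) (fun i => yv a b c (some (Sum.inl i))) = 0 := by
  rw [armN_eq_zero_iff]
  intro i
  simp [yv]

lemma armN_yv₂ (a b c : ℕ) :
    armN b ((yv a b c) none) (fun i => yv a b c (some (Sum.inr (Sum.inl i)))) = 0 := by
  rw [armN_eq_zero_iff]
  intro i
  simp [yv]

lemma armN_yv₃ (a b c : ℕ) :
    armN c ((yv a b c) none) (fun i => yv a b c (some (Sum.inr (Sum.inr i)))) = 0 := by
  rw [armN_eq_zero_iff]
  intro i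
  simp [yv]

lemma quad_yv (a b c : ℕ) :
    (yv a b c) ⬝ᵥ (gramT (a + 2) (b + 2) (c + 2)) *ᵥ (yv a b c)
      = 1 - (1 / ((a : ℝ) + 2) + 1 / ((b : ℝ) + 2) + 1 / ((c : ℝ) + 2)) := by
  rw [quadN, armN_yv₁, armN_yv₂, armN_yv₃]
  have : (yv a b c) none = 1 := rfl
  rw [this]
  ring

lemma adjT_herm (p q r : ℕ) : (adjT p q r).IsHermitian := by
  unfold Matrix.IsHermitian
  ext v w
  rw [Matrix.conjTranspose_apply]
  rcases v with _ | (i | (i | i)) <;> rcases w with _ | (j | (j | j)) <;>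
    simp [adjT, pathEntry, or_comm]

lemma gramT_herm (p q r : ℕ) : (gramT p q r).IsHermitian := by
  unfold gramT Matrix.IsHermitian
  rw [Matrix.conjTranspose_sub, Matrix.conjTranspose_smul, Matrix.conjTranspose_one,
    adjT_herm p q r, star_trivial]

lemma gramT_symm (p q r : ℕ) (x y : TVertex p q r → ℝ) :
    x ⬝ᵥ (gramT p q r) *ᵥ y = y ⬝ᵥ (gramT p q r) *ᵥ x := by
  have ht : (gramT p q r)ᵀ = gramT p q r := by
    have := gramT_herm p q r
    rwa [Matrix.IsHermitian, Matrix.conjTranspose_eq_transpose_of_trivial] at this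
  conv_lhs => rw [Matrix.dotProduct_mulVec, ← ht, Matrix.vecMul_transpose]
  rw [dotProduct_comm]

/-- Spectral expansion of a real quadratic form. -/
lemma herm_form {n : Type*} [Fintype n] [DecidableEq n] {B : Matrix n n ℝ}
    (hB : B.IsHermitian) (x : n → ℝ) :
    x ⬝ᵥ B *ᵥ x = ∑ i, hB.eigenvalues i * ((fun j => hB.eigenvectorBasis i j) ⬝ᵥ x) ^ 2 := by
  have hsU : (star (hB.eigenvectorUnitary : Matrix n n ℝ))
      = (hB.eigenvectorUnitary : Matrix n n ℝ)ᵀ := by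
    rw [Matrix.star_eq_conjTranspose, Matrix.conjTranspose_eq_transpose_of_trivial]
  have hdiag : ∀ z : n → ℝ,
      z ⬝ᵥ ((Matrix.diagonal (RCLike.ofReal ∘ hB.eigenvalues) : Matrix n n ℝ) *ᵥ z)
        = ∑ i, hB.eigenvalues i * z i ^ 2 := by
    intro z
    unfold dotProduct
    apply Finset.sum_congr rfl
    intro i _
    rw [Matrix.mulVec_diagonal]
    simp
    ring
  have hw : ∀ i, ((hB.eigenvectorUnitary : Matrix n n ℝ)ᵀ *ᵥ x) i
      = (fun j => hB.eigenvectorBasis i j) ⬝ᵥ x := by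
    intro i
    unfold Matrix.mulVec dotProduct
    apply Finset.sum_congr rfl
    intro j _
    simp only [Matrix.transpose_apply, Matrix.IsHermitian.eigenvectorUnitary_apply]
  conv_lhs => rw [hB.spectral_theorem, Unitary.conjStarAlgAut_apply]
  rw [← Matrix.mulVec_mulVec, ← Matrix.mulVec_mulVec, Matrix.dotProduct_mulVec,
    ← Matrix.mulVec_transpose, hsU, hdiag]
  exact Finset.sum_congr rfl fun i _ => by rw [hw i]


lemma eigen_dot {n : Type*} [Fintype n] [DecidableEq n] {B : Matrix n n ℝ}
    (hB : B.IsHermitian) (i j : n) :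
    (fun k => hB.eigenvectorBasis i k) ⬝ᵥ (fun k => hB.eigenvectorBasis j k)
      = if i = j then 1 else 0 := by
  have horth := hB.eigenvectorBasis.orthonormal
  rw [orthonormal_iff_ite] at horth
  have h := horth i j
  rw [PiLp.inner_apply] at h
  simpa [dotProduct, RCLike.inner_apply, starRingEnd_apply, mul_comm] using h

/-- The quadratic form is nonpositive on the hyperplane where the central
coordinate vanishes, regardless of `p, q, r`. -/
lemma form_nonpos_of_none_zero (a b c : ℕ) (x : TVertex (a + 2) (b + 2) (c + 2) → ℝ)
    (hx : x none = 0) : x ⬝ᵥ (gramT (a + 2) (b + 2) (c + 2)) *ᵥ x ≤ 0 := by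
  have hq := quadN a b c x
  rw [hx] at hq
  have n1 := armN_nonneg a (x none) (fun i => x (some (Sum.inl i)))
  have n2 := armN_nonneg b (x none) (fun i => x (some (Sum.inr (Sum.inl i))))
  have n3 := armN_nonneg c (x none) (fun i => x (some (Sum.inr (Sum.inr i))))
  rw [hx] at n1 n2 n3
  nlinarith


set_option maxHeartbeats 1600000 in
/-- The Gram matrix of `T_{p,q,r}^{(2)}` is hyperbolic (nondegenerate with
exactly one positive eigenvalue) when `1/p + 1/q + 1/r < 1`, affine (negative
semidefinite with one-dimensional kernel) when `1/p + 1/q + 1/r = 1`, and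
negative definite when `1/p + 1/q + 1/r > 1`. -/
theorem gramT_trichotomy (p q r : ℕ) (hp : 2 ≤ p) (hq : 2 ≤ q) (hr : 2 ≤ r) :
    (1 / (p : ℝ) + 1 / (q : ℝ) + 1 / (r : ℝ) < 1 →
      (gramT p q r).det ≠ 0 ∧
      ∃ hB : (gramT p q r).IsHermitian,
        (Finset.univ.filter (fun i => 0 < hB.eigenvalues i)).card = 1) ∧
    (1 / (p : ℝ) + 1 / (q : ℝ) + 1 / (r : ℝ) = 1 →
      (∀ x : TVertex p q r → ℝ, x ⬝ᵥ (gramT p q r).mulVec x ≤ 0) ∧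
      (gramT p q r).rank = Fintype.card (TVertex p q r) - 1) ∧
    (1 < 1 / (p : ℝ) + 1 / (q : ℝ) + 1 / (r : ℝ) →
      ∀ x : TVertex p q r → ℝ, x ≠ 0 → x ⬝ᵥ (gramT p q r).mulVec x < 0) := by
  obtain ⟨a, rfl⟩ : ∃ a, p = a + 2 := ⟨p - 2, by omega⟩
  obtain ⟨b, rfl⟩ : ∃ b, q = b + 2 := ⟨q - 2, by omega⟩
  obtain ⟨c, rfl⟩ : ∃ c, r = c + 2 := ⟨r - 2, by omega⟩
  have hcast : (1 / ((a + 2 : ℕ) : ℝ) + 1 / ((b + 2 : ℕ) : ℝ) + 1 / ((c + 2 : ℕ) : ℝ))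
      = 1 / ((a : ℝ) + 2) + 1 / ((b : ℝ) + 2) + 1 / ((c : ℝ) + 2) := by push_cast; ring
  refine ⟨?_, ?_, ?_⟩
  · -- hyperbolic case
    intro h
    rw [hcast] at h
    have h1S : 0 < 1 - (1 / ((a : ℝ) + 2) + 1 / ((b : ℝ) + 2) + 1 / ((c : ℝ) + 2)) := by linarith
    constructor
    · -- determinant nonzero
      intro hdet
      obtain ⟨v, hv0, hBv⟩ := (Matrix.exists_mulVec_eq_zero_iff).mpr hdet
      set t : ℝ := v none with htdef
      set u : TVertex (a + 2) (b + 2) (c + 2) → ℝ := v - t • yv a b c with hu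
      have hyvnone : yv a b c none = 1 := rfl
      have hu0 : u none = 0 := by
        rw [hu]
        simp [hyvnone, htdef]
      have hvy : v ⬝ᵥ (gramT (a + 2) (b + 2) (c + 2)) *ᵥ yv a b c = 0 := by
        rw [gramT_symm, hBv, dotProduct_zero]
      have hform : u ⬝ᵥ (gramT (a + 2) (b + 2) (c + 2)) *ᵥ u
          = t ^ 2 * (1 - (1 / ((a : ℝ) + 2) + 1 / ((b : ℝ) + 2) + 1 / ((c : ℝ) + 2))) := by
        rw [hu, Matrix.mulVec_sub, Matrix.mulVec_smul, hBv, zero_sub,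
          dotProduct_neg, sub_dotProduct, smul_dotProduct,
          dotProduct_smul, dotProduct_smul, hvy, quad_yv]
        simp only [smul_eq_mul, smul_zero, mul_zero]
        ring
      have hle := form_nonpos_of_none_zero a b c u hu0
      have ht2 : t ^ 2 ≤ 0 := by
        by_contra hc
        push_neg at hc
        have := mul_pos hc h1S
        rw [hform] at hle
        linarith
      have ht : t = 0 := by
        have h2 : t ^ 2 = 0 := le_antisymm ht2 (sq_nonneg t)
        exact (pow_eq_zero_iff (two_ne_zero)).mp h2
      have hvnone : v none = 0 := by rw [← htdef]; exact ht
      have hq := quadN a b c v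
      have hform0 : v ⬝ᵥ gramT (a + 2) (b + 2) (c + 2) *ᵥ v = 0 := by
        rw [hBv, dotProduct_zero]
      rw [hform0, hvnone] at hq
      norm_num at hq
      have n1 := armN_nonneg a (v none) (fun i => v (some (Sum.inl i)))
      have n2 := armN_nonneg b (v none) (fun i => v (some (Sum.inr (Sum.inl i))))
      have n3 := armN_nonneg c (v none) (fun i => v (some (Sum.inr (Sum.inr i))))
      rw [hvnone] at n1 n2 n3
      have e1 : armN a (v none) (fun i => v (some (Sum.inl i))) = 0 := by
        rw [hvnone]; linarith
      have e2 : armN b (v none) (fun i => v (some (Sum.inr (Sum.inl i)))) = 0 := by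
        rw [hvnone]; linarith
      have e3 : armN c (v none) (fun i => v (some (Sum.inr (Sum.inr i)))) = 0 := by
        rw [hvnone]; linarith
      have hsm := eq_smul_yv a b c v e1 e2 e3
      rw [hvnone, zero_smul] at hsm
      exact hv0 hsm
    · -- exactly one positive eigenvalue
      refine ⟨gramT_herm (a + 2) (b + 2) (c + 2), ?_⟩
      have hyq := quad_yv a b c
      have hex : ∃ i, 0 < (gramT_herm (a + 2) (b + 2) (c + 2)).eigenvalues i := by
        by_contra hno
        push_neg at hno
        have hf := herm_form (gramT_herm (a + 2) (b + 2) (c + 2)) (yv a b c)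
        have hle : yv a b c ⬝ᵥ gramT (a + 2) (b + 2) (c + 2) *ᵥ yv a b c ≤ 0 := by
          rw [hf]
          apply Finset.sum_nonpos
          intro i _
          exact mul_nonpos_of_nonpos_of_nonneg (hno i) (sq_nonneg _)
        rw [hyq] at hle
        linarith
      obtain ⟨i0, hi0⟩ := hex
      have huniq : ∀ j, 0 < (gramT_herm (a + 2) (b + 2) (c + 2)).eigenvalues j → j = i0 := by
        intro j hj
        by_contra hne
        set hB := gramT_herm (a + 2) (b + 2) (c + 2) with hBdef
        set uu : TVertex (a + 2) (b + 2) (c + 2) → ℝ := fun k => hB.eigenvectorBasis j k with huu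
        set ww : TVertex (a + 2) (b + 2) (c + 2) → ℝ := fun k => hB.eigenvectorBasis i0 k with hww
        have hdjj : uu ⬝ᵥ uu = 1 := by rw [huu]; simpa using eigen_dot hB j j
        have hdji : uu ⬝ᵥ ww = 0 := by rw [huu, hww]; simpa [hne] using eigen_dot hB j i0
        have hdij : ww ⬝ᵥ uu = 0 := by
          rw [huu, hww]
          have hne' : i0 ≠ j := fun hc => hne hc.symm
          simpa [hne'] using eigen_dot hB i0 j
        have hdii : ww ⬝ᵥ ww = 1 := by rw [hww]; simpa using eigen_dot hB i0 i0
        have hBu : gramT (a + 2) (b + 2) (c + 2) *ᵥ uu = hB.eigenvalues j • uu :=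
          hB.mulVec_eigenvectorBasis j
        have hBw : gramT (a + 2) (b + 2) (c + 2) *ᵥ ww = hB.eigenvalues i0 • ww :=
          hB.mulVec_eigenvectorBasis i0
        by_cases h0 : uu none = 0
        · have hposf : 0 < uu ⬝ᵥ gramT (a + 2) (b + 2) (c + 2) *ᵥ uu := by
            rw [hBu, dotProduct_smul, hdjj, smul_eq_mul, mul_one]
            exact hj
          have := form_nonpos_of_none_zero a b c uu h0
          linarith
        · set z : TVertex (a + 2) (b + 2) (c + 2) → ℝ
            := (-(ww none)) • uu + (uu none) • ww with hz
          have hz0 : z none = 0 := by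
            rw [hz]
            simp only [Pi.add_apply, Pi.smul_apply, smul_eq_mul]
            ring
          have hBz : gramT (a + 2) (b + 2) (c + 2) *ᵥ z
              = (-(ww none)) • (hB.eigenvalues j • uu) + (uu none) • (hB.eigenvalues i0 • ww) := by
            rw [hz, Matrix.mulVec_add, Matrix.mulVec_smul, Matrix.mulVec_smul, hBu, hBw]
          have hform : z ⬝ᵥ gramT (a + 2) (b + 2) (c + 2) *ᵥ z
              = (ww none) ^ 2 * hB.eigenvalues j + (uu none) ^ 2 * hB.eigenvalues i0 := by
            rw [hBz, hz]
            simp only [add_dotProduct, dotProduct_add, smul_dotProduct,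
              dotProduct_smul, smul_eq_mul, hdjj, hdji, hdij, hdii]
            ring
          have hupos : 0 < (uu none) ^ 2 :=
            lt_of_le_of_ne (sq_nonneg _) (Ne.symm (pow_ne_zero 2 h0))
          have hpos : 0 < z ⬝ᵥ gramT (a + 2) (b + 2) (c + 2) *ᵥ z := by
            rw [hform]
            have h1 : 0 ≤ (ww none) ^ 2 * hB.eigenvalues j :=
              mul_nonneg (sq_nonneg _) hj.le
            have h2 : 0 < (uu none) ^ 2 * hB.eigenvalues i0 := mul_pos hupos hi0
            linarith
          have := form_nonpos_of_none_zero a b c z hz0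
          linarith
      rw [Finset.card_eq_one]
      refine ⟨i0, Finset.eq_singleton_iff_unique_mem.mpr ⟨?_, ?_⟩⟩
      · exact Finset.mem_filter.mpr ⟨Finset.mem_univ _, hi0⟩
      · intro j hj
        exact huniq j (Finset.mem_filter.mp hj).2
  · -- affine case
    intro h
    rw [hcast] at h
    have hz1 : (1 - (1 / ((a : ℝ) + 2) + 1 / ((b : ℝ) + 2) + 1 / ((c : ℝ) + 2))) = 0 := by
      linarith
    have hle : ∀ x : TVertex (a + 2) (b + 2) (c + 2) → ℝ,
        x ⬝ᵥ gramT (a + 2) (b + 2) (c + 2) *ᵥ x ≤ 0 := by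
      intro x
      have hq := quadN a b c x
      rw [hz1, zero_mul] at hq
      have n1 := armN_nonneg a (x none) (fun i => x (some (Sum.inl i)))
      have n2 := armN_nonneg b (x none) (fun i => x (some (Sum.inr (Sum.inl i))))
      have n3 := armN_nonneg c (x none) (fun i => x (some (Sum.inr (Sum.inr i))))
      linarith
    refine ⟨hle, ?_⟩
    have hyne : yv a b c ≠ 0 := by
      intro hcon
      have h1 := congrFun hcon none
      rw [show yv a b c none = 1 from rfl] at h1
      exact one_ne_zero h1
    have hker : LinearMap.ker (gramT (a + 2) (b + 2) (c + 2)).mulVecLin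
        = Submodule.span ℝ {yv a b c} := by
      apply le_antisymm
      · intro x hx
        have hBx : gramT (a + 2) (b + 2) (c + 2) *ᵥ x = 0 := by
          have := LinearMap.mem_ker.mp hx
          rwa [Matrix.mulVecLin_apply] at this
        have hq := quadN a b c x
        rw [hz1, zero_mul, hBx, dotProduct_zero] at hq
        have n1 := armN_nonneg a (x none) (fun i => x (some (Sum.inl i)))
        have n2 := armN_nonneg b (x none) (fun i => x (some (Sum.inr (Sum.inl i))))
        have n3 := armN_nonneg c (x none) (fun i => x (some (Sum.inr (Sum.inr i))))
        have e1 : armN a (x none) (fun i => x (some (Sum.inl i))) = 0 := by linarith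
        have e2 : armN b (x none) (fun i => x (some (Sum.inr (Sum.inl i)))) = 0 := by linarith
        have e3 : armN c (x none) (fun i => x (some (Sum.inr (Sum.inr i)))) = 0 := by linarith
        have hsm := eq_smul_yv a b c x e1 e2 e3
        exact Submodule.mem_span_singleton.mpr ⟨x none, hsm.symm⟩
      · rw [Submodule.span_le, Set.singleton_subset_iff]
        have hpsd : (-(gramT (a + 2) (b + 2) (c + 2))).PosSemidef := by
          rw [Matrix.posSemidef_iff_dotProduct_mulVec]
          constructor
          · exact (gramT_herm _ _ _).neg
          · intro x
            have hst : star x = x := by funext k; simp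
            rw [hst, Matrix.neg_mulVec, dotProduct_neg]
            have := hle x
            linarith
        have h0 : star (yv a b c) ⬝ᵥ (-(gramT (a + 2) (b + 2) (c + 2))) *ᵥ yv a b c = 0 := by
          have hst : star (yv a b c) = yv a b c := by funext k; simp
          rw [hst, Matrix.neg_mulVec, dotProduct_neg, quad_yv]
          linarith
        have hker0 := (hpsd.dotProduct_mulVec_zero_iff (yv a b c)).mp h0
        rw [Matrix.neg_mulVec] at hker0
        have hky : gramT (a + 2) (b + 2) (c + 2) *ᵥ yv a b c = 0 := neg_eq_zero.mp hker0
        exact LinearMap.mem_ker.mpr (by rwa [Matrix.mulVecLin_apply])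
    have hrn := LinearMap.finrank_range_add_finrank_ker
      ((gramT (a + 2) (b + 2) (c + 2)).mulVecLin)
    rw [hker, finrank_span_singleton hyne, Module.finrank_fintype_fun_eq_card] at hrn
    unfold Matrix.rank
    omega

  · -- negative definite case
    intro h x hx
    rw [hcast] at h
    have hq := quadN a b c x
    have n1 := armN_nonneg a (x none) (fun i => x (some (Sum.inl i)))
    have n2 := armN_nonneg b (x none) (fun i => x (some (Sum.inr (Sum.inl i))))
    have n3 := armN_nonneg c (x none) (fun i => x (some (Sum.inr (Sum.inr i))))
    have hneg : 1 - (1 / ((a : ℝ) + 2) + 1 / ((b : ℝ) + 2) + 1 / ((c : ℝ) + 2)) < 0 := by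
      linarith
    have hle : x ⬝ᵥ (gramT (a + 2) (b + 2) (c + 2)) *ᵥ x ≤ 0 := by
      nlinarith [sq_nonneg (x none)]
    rcases lt_or_eq_of_le hle with hlt | heq
    · exact hlt
    · exfalso
      rw [heq] at hq
      have ht2 : (x none) ^ 2 ≤ 0 := by nlinarith
      have ht : x none = 0 := by nlinarith [sq_nonneg (x none)]
      rw [ht] at hq n1 n2 n3
      norm_num at hq
      have e1 : armN a (x none) (fun i => x (some (Sum.inl i))) = 0 := by
        rw [ht]; linarith
      have e2 : armN b (x none) (fun i => x (some (Sum.inr (Sum.inl i)))) = 0 := by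
        rw [ht]; linarith
      have e3 : armN c (x none) (fun i => x (some (Sum.inr (Sum.inr i)))) = 0 := by
        rw [ht]; linarith
      have := eq_smul_yv a b c x e1 e2 e3
      rw [ht, zero_smul] at this
      exact hx this
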